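/- For every Gauss diagram D on the Wilson line with zero index, v21(D) = v22(D); that is, the two order-two Gauss diagram invariants of long virtual knots coincide on all zero-index diagrams. -/

import Mathlib

noncomputable section

namespace Gauss

attribute [local instance] Classical.propDecidable

/-- An arrow of a Gauss diagram on the Wilson line: a tail point, a head point,
and a sign. -/
structure Arrow where
  t : ℝ
  h : ℝ
  sgn : ℤ

/-- `p` lies strictly between `a` and `b`. -/
def Between (a b p : ℝ) : Prop := (a < p ∧ p < b) ∨ (b < p ∧ p < a)

/-- Two arrows are linked if they are distinct and exactly one of the two
endpoints of `y` lies strictly between the two endpoints of `x`. -/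
def Linked (x y : Arrow) : Prop :=
  x ≠ y ∧ Xor' (Between x.t x.h y.t) (Between x.t x.h y.h)

/-- `delta x y = 1` if the head of `y` lies strictly between the endpoints of `x`,
and `-1` otherwise. -/
def delta (x y : Arrow) : ℤ := if Between x.t x.h y.h then 1 else -1

/-- The index `I_D(x)` of an arrow `x` in the diagram `D`. -/
def index (D : Finset Arrow) (x : Arrow) : ℤ :=
  ∑ y ∈ D.filter (fun y => Linked x y), delta x y * x.sgn * y.sgn

/-- `p` is an endpoint of the diagram `D`. -/
def IsEndpoint (D : Finset Arrow) (p : ℝ) : Prop :=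
  ∃ a ∈ D, p = a.t ∨ p = a.h

/-- A finite set of arrows is a Gauss diagram on the Wilson line if every sign
is `±1` and all endpoints are pairwise distinct. -/
def IsGaussDiagram (D : Finset Arrow) : Prop :=
  (∀ a ∈ D, a.sgn = 1 ∨ a.sgn = -1) ∧
  (∀ a ∈ D, a.t ≠ a.h) ∧
  (∀ a ∈ D, ∀ b ∈ D, a ≠ b → a.t ≠ b.t ∧ a.t ≠ b.h ∧ a.h ≠ b.t ∧ a.h ≠ b.h)

/-- Two endpoints of `D` are adjacent if no endpoint of `D` lies strictly
between them. -/
def Adjacent (D : Finset Arrow) (p q : ℝ) : Prop :=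
  p ≠ q ∧ IsEndpoint D p ∧ IsEndpoint D q ∧ ∀ r, IsEndpoint D r → ¬ Between p q r

/-- The degree of an arrow in the intersection graph of `D`: the number of
arrows linked with it. -/
def degree (D : Finset Arrow) (x : Arrow) : ℕ :=
  (D.filter (fun y => Linked x y)).card

/-- A pair of arrows is heads-in if the head of each lies strictly between the
endpoints of the other. -/
def HeadsIn (x y : Arrow) : Prop :=
  Between x.t x.h y.h ∧ Between y.t y.h x.h

/-- A pair of arrows is heads-out if the head of neither lies strictly between
the endpoints of the other. -/
def HeadsOut (x y : Arrow) : Prop :=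
  ¬ Between x.t x.h y.h ∧ ¬ Between y.t y.h x.h

/-- The order-two invariant counting heads-out linked pairs, weighted by signs.
Each unordered pair is counted once, via the ordering of the tails. -/
def v21 (D : Finset Arrow) : ℤ :=
  ∑ p ∈ (D ×ˢ D).filter (fun p => p.1.t < p.2.t ∧ Linked p.1 p.2 ∧ HeadsOut p.1 p.2),
    p.1.sgn * p.2.sgn

/-- The order-two invariant counting heads-in linked pairs, weighted by signs.
Each unordered pair is counted once, via the ordering of the tails. -/
def v22 (D : Finset Arrow) : ℤ :=
  ∑ p ∈ (D ×ˢ D).filter (fun p => p.1.t < p.2.t ∧ Linked p.1 p.2 ∧ HeadsIn p.1 p.2),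
    p.1.sgn * p.2.sgn

section Aux
open Finset

lemma between_comm (a b p : ℝ) : Between a b p ↔ Between b a p := or_comm

lemma between_of_lt {a b : ℝ} (h : a < b) (p : ℝ) : Between a b p ↔ (a < p ∧ p < b) := by
  unfold Between
  constructor
  · rintro (h' | ⟨h1, h2⟩)
    · exact h'
    · exact absurd (h1.trans h2) (lt_asymm h)
  · exact Or.inl

lemma cross_iff {a b c d : ℝ} (hab : a < b) (hcd : c < d)
    (h1 : a ≠ c) (h4 : b ≠ d) :
    Xor' (Between a b c) (Between a b d) ↔
      ((a < c ∧ c < b ∧ b < d) ∨ (c < a ∧ a < d ∧ d < b)) := by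
  rw [between_of_lt hab, between_of_lt hab]
  unfold Xor'
  constructor
  · rintro (⟨⟨hac, hcb⟩, hn⟩ | ⟨⟨had, hdb⟩, hn⟩)
    · left
      refine ⟨hac, hcb, ?_⟩
      rcases lt_or_gt_of_ne h4 with h | h
      · exact h
      · exact absurd ⟨by linarith, h⟩ hn
    · right
      refine ⟨?_, had, hdb⟩
      rcases lt_or_gt_of_ne h1 with h | h
      · exact absurd ⟨h, by linarith⟩ hn
      · exact h
  · rintro (⟨hac, hcb, hbd⟩ | ⟨hca, had, hdb⟩)
    · exact Or.inl ⟨⟨hac, hcb⟩, fun h => absurd hbd (lt_asymm h.2)⟩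
    · exact Or.inr ⟨⟨had, hdb⟩, fun h => absurd hca (lt_asymm h.1)⟩

lemma xor_between_symm {a b c d : ℝ} (hab : a ≠ b) (hcd : c ≠ d)
    (h1 : a ≠ c) (h2 : a ≠ d) (h3 : b ≠ c) (h4 : b ≠ d) :
    Xor' (Between a b c) (Between a b d) ↔ Xor' (Between c d a) (Between c d b) := by
  have key : ∀ a b c d : ℝ, a < b → c < d → a ≠ c → b ≠ d →
      (Xor' (Between a b c) (Between a b d) ↔ Xor' (Between c d a) (Between c d b)) := by
    intro a b c d hab hcd h1 h4
    rw [cross_iff hab hcd h1 h4, cross_iff hcd hab h1.symm h4.symm]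
    tauto
  unfold Xor'
  rcases lt_or_gt_of_ne hab with hh | hh <;> rcases lt_or_gt_of_ne hcd with hh' | hh'
  · exact key a b c d hh hh' h1 h4
  · rw [between_comm c d a, between_comm c d b, xor_comm (Between a b c)]
    exact key a b d c hh hh' h2 h3
  · rw [between_comm a b c, between_comm a b d, xor_comm (Between c d a)]
    exact key b a c d hh hh' h3 h2
  · rw [between_comm a b c, between_comm a b d, between_comm c d a, between_comm c d b,
      xor_comm (Between b a c), xor_comm (Between d c a)]
    exact key b a d c hh hh' h4 h1

lemma linked_symm {D : Finset Arrow} (hD : IsGaussDiagram D) {x y : Arrow}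
    (hx : x ∈ D) (hy : y ∈ D) : Linked x y ↔ Linked y x := by
  by_cases hxy : x = y
  · subst hxy; exact Iff.rfl
  obtain ⟨-, hth, hdist⟩ := hD
  obtain ⟨htt, hth', hht, hhh⟩ := hdist x hx y hy hxy
  unfold Linked
  rw [xor_between_symm (hth x hx) (hth y hy) htt hth' hht hhh]
  exact and_congr_left' ⟨Ne.symm, Ne.symm⟩

lemma sum_swap_prod (D : Finset Arrow) (g : Arrow × Arrow → ℤ) :
    ∑ p ∈ D ×ˢ D, g p = ∑ p ∈ D ×ˢ D, g p.swap := by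
  refine Finset.sum_equiv (Equiv.prodComm _ _) ?_ ?_
  · intro i; simp [Finset.mem_product, and_comm]
  · intro i _; simp

end Aux

theorem stmt7_aux (D : Finset Arrow) (hD : IsGaussDiagram D)
    (hzero : ∀ x ∈ D, index D x = 0) : v21 D = v22 D := by
  classical
  have hth : ∀ a ∈ D, a.t ≠ a.h := hD.2.1
  have hdist := hD.2.2
  set P := D ×ˢ D with hP
  -- total index sum is zero
  have hS : (∑ p ∈ P, if Linked p.1 p.2 then delta p.1 p.2 * p.1.sgn * p.2.sgn else 0) = 0 := by
    rw [hP, Finset.sum_product]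
    have : ∀ x ∈ D, (∑ y ∈ D, if Linked x y then delta x y * x.sgn * y.sgn else 0)
        = index D x := by
      intro x _
      rw [index, Finset.sum_filter]
    rw [Finset.sum_congr rfl this]
    exact Finset.sum_eq_zero hzero
  -- pair up each ordered pair with its swap
  have h2 : (∑ p ∈ P,
      ((if Linked p.1 p.2 then delta p.1 p.2 * p.1.sgn * p.2.sgn else 0)
        + (if Linked p.2 p.1 then delta p.2 p.1 * p.2.sgn * p.1.sgn else 0))) = 0 := by
    have hS2 : (∑ p ∈ P, if Linked p.2 p.1 then delta p.2 p.1 * p.2.sgn * p.1.sgn else 0) = 0 := by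
      have h := sum_swap_prod D (fun p => if Linked p.1 p.2 then delta p.1 p.2 * p.1.sgn * p.2.sgn else 0)
      simp only [Prod.fst_swap, Prod.snd_swap] at h
      rw [hP, ← h, ← hP, hS]
    rw [Finset.sum_add_distrib, hS, hS2]
    ring
  -- pointwise identity
  have h3 : ∀ p ∈ P,
      ((if Linked p.1 p.2 then delta p.1 p.2 * p.1.sgn * p.2.sgn else 0)
        + (if Linked p.2 p.1 then delta p.2 p.1 * p.2.sgn * p.1.sgn else 0))
      = 2 * (if Linked p.1 p.2 ∧ HeadsIn p.1 p.2 then p.1.sgn * p.2.sgn else 0)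
        - 2 * (if Linked p.1 p.2 ∧ HeadsOut p.1 p.2 then p.1.sgn * p.2.sgn else 0) := by
    rintro ⟨x, y⟩ hp
    rw [hP, Finset.mem_product] at hp
    obtain ⟨hx, hy⟩ := hp
    by_cases hL : Linked x y
    · have hL' : Linked y x := (linked_symm hD hx hy).mp hL
      simp only [hL, hL', if_true, true_and]
      unfold delta HeadsIn HeadsOut
      by_cases hB1 : Between x.t x.h y.h <;> by_cases hB2 : Between y.t y.h x.h <;>
        simp [hB1, hB2] <;> ring
    · have hL' : ¬ Linked y x := fun h => hL ((linked_symm hD hy hx).mp h)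
      simp [hL, hL']
  have key : (∑ p ∈ P, if Linked p.1 p.2 ∧ HeadsIn p.1 p.2 then p.1.sgn * p.2.sgn else 0)
      = ∑ p ∈ P, if Linked p.1 p.2 ∧ HeadsOut p.1 p.2 then p.1.sgn * p.2.sgn else 0 := by
    have := (Finset.sum_congr rfl h3).symm.trans h2
    rw [Finset.sum_sub_distrib, ← Finset.mul_sum, ← Finset.mul_sum] at this
    linarith
  -- unfolding the invariants
  have hunfold : ∀ Q : Arrow → Arrow → Prop, (∀ x y, Q x y ↔ Q y x) →
      (∑ p ∈ P, if Linked p.1 p.2 ∧ Q p.1 p.2 then p.1.sgn * p.2.sgn else 0)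
      = 2 * ∑ p ∈ P.filter (fun p => p.1.t < p.2.t ∧ Linked p.1 p.2 ∧ Q p.1 p.2),
          p.1.sgn * p.2.sgn := by
    intro Q hQ
    rw [Finset.sum_filter]
    have split : ∀ p ∈ P,
        (if Linked p.1 p.2 ∧ Q p.1 p.2 then p.1.sgn * p.2.sgn else 0)
        = (if p.1.t < p.2.t ∧ Linked p.1 p.2 ∧ Q p.1 p.2 then p.1.sgn * p.2.sgn else 0)
          + (if p.2.t < p.1.t ∧ Linked p.1 p.2 ∧ Q p.1 p.2 then p.1.sgn * p.2.sgn else 0) := by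
      rintro ⟨x, y⟩ hp
      rw [hP, Finset.mem_product] at hp
      obtain ⟨hx, hy⟩ := hp
      by_cases hL : Linked x y
      · by_cases hQ' : Q x y
        · have htne : x.t ≠ y.t := (hdist x hx y hy hL.1).1
          rcases lt_or_gt_of_ne htne with h | h
          · simp [hL, hQ', h, lt_asymm h]
          · simp [hL, hQ', h, lt_asymm h]
        · simp [hQ']
      · simp [hL]
    rw [Finset.sum_congr rfl split, Finset.sum_add_distrib]
    have hsw : (∑ p ∈ P, if p.2.t < p.1.t ∧ Linked p.1 p.2 ∧ Q p.1 p.2 then p.1.sgn * p.2.sgn else 0)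
        = ∑ p ∈ P, if p.1.t < p.2.t ∧ Linked p.1 p.2 ∧ Q p.1 p.2 then p.1.sgn * p.2.sgn else 0 := by
      rw [hP, sum_swap_prod D (fun p => if p.1.t < p.2.t ∧ Linked p.1 p.2 ∧ Q p.1 p.2 then p.1.sgn * p.2.sgn else 0)]
      refine Finset.sum_congr rfl ?_
      rintro ⟨x, y⟩ hp
      rw [Finset.mem_product] at hp
      obtain ⟨hx, hy⟩ := hp
      simp only [Prod.swap]
      refine if_congr ?_ (mul_comm _ _) rfl
      rw [linked_symm hD hy hx, hQ y x]
    rw [hsw]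
    ring
  have hQin : ∀ x y : Arrow, HeadsIn x y ↔ HeadsIn y x := fun x y => and_comm
  have hQout : ∀ x y : Arrow, HeadsOut x y ↔ HeadsOut y x := fun x y => and_comm
  have e1 := hunfold HeadsIn hQin
  have e2 := hunfold HeadsOut hQout
  rw [e1, e2] at key
  have : v21 D = ∑ p ∈ P.filter (fun p => p.1.t < p.2.t ∧ Linked p.1 p.2 ∧ HeadsOut p.1 p.2),
      p.1.sgn * p.2.sgn := rfl
  have : v22 D = ∑ p ∈ P.filter (fun p => p.1.t < p.2.t ∧ Linked p.1 p.2 ∧ HeadsIn p.1 p.2),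
      p.1.sgn * p.2.sgn := rfl
  rw [v21, v22]
  rw [← hP]
  linarith

/-- the two order-two Gauss diagram invariants coincide on all
zero-index diagrams. -/
theorem stmt7 (D : Finset Arrow) (hD : IsGaussDiagram D)
    (hzero : ∀ x ∈ D, index D x = 0) : v21 D = v22 D := by
  exact stmt7_aux D hD hzero

end Gauss
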